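/- Let G(V,E) be a chordal graph with maximal cliques C_1, …, C_t, and let Q be a symmetric |V| × |V| real matrix with sparsity pattern G (i.e., Q_{βγ} = 0 whenever β ≠ γ and {β,γ} ∉ E). Then Q is positive semidefinite if and only if Q can be written as Q = Σ_{i=1}^t Q_i where each Q_i is positive semidefinite and has nonzero entries only in rows and columns indexed by C_i. -/

import Mathlib

/-- A graph is chordal if every cycle of length at least four has a chord. -/
def IsChordal {V : Type*} (G : SimpleGraph V) : Prop :=
  ∀ ⦃v : V⦄ (w : G.Walk v v), w.IsCycle → 4 ≤ w.length →
    ∃ a b, a ∈ w.support ∧ b ∈ w.support ∧ G.Adj a b ∧ ¬ w.toSubgraph.Adj a b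

/-- A maximal clique of `G`. -/
def IsMaximalClique {V : Type*} (G : SimpleGraph V) (C : Set V) : Prop :=
  G.IsClique C ∧ ∀ D, G.IsClique D → C ⊆ D → D = C

set_option linter.unusedSectionVars false

section Matrices
open Matrix
variable {V : Type*} [Fintype V] [DecidableEq V]
variable {V : Type*} [Fintype V] [DecidableEq V]

lemma quad_two (Q : Matrix V V ℝ) (v γ : V) (t : ℝ) :
    ((Pi.single γ 1 : V → ℝ) + t • (Pi.single v 1 : V → ℝ)) ⬝ᵥ
      (Q *ᵥ ((Pi.single γ 1 : V → ℝ) + t • (Pi.single v 1 : V → ℝ))) =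
      Q γ γ + t * Q γ v + t * Q v γ + t * t * Q v v := by
  simp [mulVec_add, dotProduct_add, add_dotProduct, smul_dotProduct, dotProduct_smul,
    mulVec_smul, single_dotProduct, mulVec_single]
  ring

lemma psd_row_zero {Q : Matrix V V ℝ} (hQ : Q.PosSemidef) (v : V) (hd : Q v v = 0) (γ : V) :
    Q v γ = 0 := by
  have hsym : Q γ v = Q v γ := by
    have h := hQ.1
    rw [Matrix.IsHermitian] at h
    conv_lhs => rw [← h]
    simp [conjTranspose_apply]
  by_contra hne
  have key : ∀ t : ℝ, 0 ≤ Q γ γ + 2 * (t * Q v γ) := by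
    intro t
    have h := hQ.dotProduct_mulVec_nonneg ((Pi.single γ 1 : V → ℝ) + t • (Pi.single v 1 : V → ℝ))
    rw [show star ((Pi.single γ 1 : V → ℝ) + t • (Pi.single v 1 : V → ℝ)) =
      ((Pi.single γ 1 : V → ℝ) + t • (Pi.single v 1 : V → ℝ)) by simp] at h
    rw [quad_two] at h
    rw [hd, hsym] at h
    linarith
  have h2 := key (-(Q γ γ + 1) / (2 * Q v γ))
  have h3 : 2 * (-(Q γ γ + 1) / (2 * Q v γ) * Q v γ) = -(Q γ γ + 1) := by
    field_simp
  rw [h3] at h2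
  linarith

lemma psd_symm_entries {Q : Matrix V V ℝ} (h : Q.IsHermitian) : ∀ β γ : V, Q γ β = Q β γ := by
  intro β γ
  rw [Matrix.IsHermitian] at h
  conv_lhs => rw [← h]
  simp [conjTranspose_apply]

lemma psd_peel {Q : Matrix V V ℝ} (hQ : Q.PosSemidef) (v : V) (hd : 0 < Q v v) :
    Matrix.PosSemidef (Matrix.of fun β γ => Q β v * Q v γ / Q v v) ∧
    Matrix.PosSemidef (Q - Matrix.of fun β γ => Q β v * Q v γ / Q v v) := by
  set d := Q v v with hdd
  have hsym := psd_symm_entries hQ.1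
  set Q1 : Matrix V V ℝ := Matrix.of fun β γ => Q β v * Q v γ / d with hQ1
  have hmul : ∀ x : V → ℝ, (Q1 *ᵥ x) = fun β => Q β v * ((Q v) ⬝ᵥ x) / d := by
    intro x; funext β
    show ∑ γ, (Q β v * Q v γ / d) * x γ = Q β v * (∑ γ, Q v γ * x γ) / d
    rw [Finset.mul_sum, Finset.sum_div]
    congr 1 with γ; ring
  have hquad : ∀ x : V → ℝ, x ⬝ᵥ (Q1 *ᵥ x) = ((Q v) ⬝ᵥ x) * ((Q v) ⬝ᵥ x) / d := by
    intro x
    rw [hmul]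
    show ∑ β, x β * (Q β v * ((Q v) ⬝ᵥ x) / d) = _
    have : ∀ β, x β * (Q β v * ((Q v) ⬝ᵥ x) / d) = (Q v β * x β) * (((Q v) ⬝ᵥ x) / d) := by
      intro β; rw [hsym β v]; ring
    rw [Finset.sum_congr rfl fun β _ => this β, ← Finset.sum_mul]
    show (Q v) ⬝ᵥ x * _ = _
    ring
  have hherm1 : Q1.IsHermitian := by
    rw [Matrix.IsHermitian]
    ext β γ
    simp only [conjTranspose_apply, hQ1, Matrix.of_apply, star_trivial]
    rw [hsym γ v, hsym v β]
    ring
  have hpsd1 : Q1.PosSemidef := by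
    refine Matrix.PosSemidef.of_dotProduct_mulVec_nonneg hherm1 fun x => ?_
    rw [show (star x) = x by simp, hquad]
    exact div_nonneg (mul_self_nonneg _) hd.le
  refine ⟨hpsd1, Matrix.PosSemidef.of_dotProduct_mulVec_nonneg (hQ.1.sub hherm1) fun x => ?_⟩
  rw [show (star x) = x by simp]
  set c := (Q v) ⬝ᵥ x with hc
  have hrew : x ⬝ᵥ ((Q - Q1) *ᵥ x) = x ⬝ᵥ (Q *ᵥ x) - c * c / d := by
    rw [sub_mulVec, dotProduct_sub, hquad]
  set z : V → ℝ := x - (c / d) • (Pi.single v 1 : V → ℝ) with hz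
  have hgoal := hQ.dotProduct_mulVec_nonneg z
  rw [show (star z) = z by simp] at hgoal
  have hxv : x ⬝ᵥ (Q *ᵥ (Pi.single v 1 : V → ℝ)) = c := by
    rw [mulVec_single]
    show ∑ β, x β * (Q β v * 1) = c
    rw [hc]
    show _ = ∑ β, Q v β * x β
    congr 1 with β; rw [hsym β v]; ring
  have hvx : (Pi.single v 1 : V → ℝ) ⬝ᵥ (Q *ᵥ x) = c := by
    rw [single_dotProduct, one_mul]; rfl
  have hvv : (Pi.single v 1 : V → ℝ) ⬝ᵥ (Q *ᵥ (Pi.single v 1 : V → ℝ)) = d := by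
    rw [mulVec_single, single_dotProduct]
    simp [hdd]
  have hzz : z ⬝ᵥ (Q *ᵥ z) = x ⬝ᵥ (Q *ᵥ x) - c * c / d := by
    rw [hz]
    rw [mulVec_sub, mulVec_smul, dotProduct_sub, sub_dotProduct, sub_dotProduct,
      dotProduct_smul, smul_dotProduct, smul_dotProduct, dotProduct_smul,
      hxv, hvx, hvv]
    have hd' : d ≠ 0 := ne_of_gt hd
    simp only [smul_eq_mul]
    rw [div_mul_cancel₀ c hd']
    ring
  rw [hrew, ← hzz]
  exact hgoal
end Matrices

section Graphs
open SimpleGraph Walk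

lemma isChordal_induce {V : Type*} {G : SimpleGraph V} (h : IsChordal G) (s : Set V) :
    IsChordal (G.induce s) := by
  intro v w hcyc hlen
  set f := SimpleGraph.Embedding.induce (G := G) s with hf
  have hinj : Function.Injective f.toHom := f.injective
  have hmc : (w.map f.toHom).IsCycle := (Walk.map_isCycle_iff_of_injective hinj).mpr hcyc
  have hml : 4 ≤ (w.map f.toHom).length := by rwa [Walk.length_map]
  obtain ⟨a, b, ha, hb, hadj, hnadj⟩ := h (w.map f.toHom) hmc hml
  rw [Walk.support_map, List.mem_map] at ha hb
  obtain ⟨a', ha', rfl⟩ := ha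
  obtain ⟨b', hb', rfl⟩ := hb
  refine ⟨a', b', ha', hb', hadj, fun hc => hnadj ?_⟩
  rw [Walk.toSubgraph_map]
  exact ⟨a', b', hc, rfl, rfl⟩

variable {V : Type*} [DecidableEq V] {G : SimpleGraph V}

lemma length_take_add_drop {x y u : V} (p : G.Walk x y) (h : u ∈ p.support) :
    (p.takeUntil u h).length + (p.dropUntil u h).length = p.length := by
  conv_rhs => rw [← p.take_spec h]
  rw [Walk.length_append]

lemma mem_support_cons_of_mem {x x₂ y z : V} (h : G.Adj x x₂) (q : G.Walk x₂ y)
    (hz : z ∈ q.support) : z ∈ (Walk.cons h q).support := by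
  rw [support_cons]; exact List.mem_cons_of_mem _ hz

/-- In a minimum-length walk (among those with support inside `W`), any `G`-edge between
support vertices is an edge of the walk. -/
lemma chord_mem_edges {W : Set V} {y : V} :
    ∀ {x : V} (p : G.Walk x y), (∀ z ∈ p.support, z ∈ W) →
      (∀ q : G.Walk x y, (∀ z ∈ q.support, z ∈ W) → p.length ≤ q.length) →
      ∀ {u v : V}, u ∈ p.support → v ∈ p.support → G.Adj u v → s(u, v) ∈ p.edges := by
  intro x p
  induction p with
  | nil =>
    intro _ _ u v hu hv hadj
    rw [support_nil, List.mem_singleton] at hu hv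
    exact absurd hadj (by rw [hu, hv]; exact G.irrefl)
  | @cons x x₂ y h q ih =>
    intro hW hmin u v hu hv hadj
    rw [support_cons, List.mem_cons] at hu hv
    have hcase : ∀ v' : V, v' ∈ q.support → G.Adj x v' →
        s(x, v') ∈ (Walk.cons h q).edges := by
      intro v' hv' hadj'
      have hq' : ∀ z ∈ (Walk.cons hadj' (q.dropUntil v' hv')).support, z ∈ W := by
        intro z hz
        rw [support_cons, List.mem_cons] at hz
        rcases hz with rfl | hz
        · exact hW _ (start_mem_support _)
        · exact hW _ (mem_support_cons_of_mem h q (support_dropUntil_subset q hv' hz))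
      have hlen := hmin _ hq'
      rw [length_cons, length_cons] at hlen
      have hsplit := length_take_add_drop q hv'
      have hdle : (q.dropUntil v' hv').length ≤ q.length := by omega
      have htake0 : (q.takeUntil v' hv').length = 0 := by omega
      have hx2 : x₂ = v' := eq_of_length_eq_zero htake0
      subst hx2
      rw [edges_cons, List.mem_cons]
      left; rfl
    rcases hu with rfl | hu <;> rcases hv with rfl | hv
    · exact absurd hadj (G.irrefl)
    · exact hcase v hv hadj
    · rw [Sym2.eq_swap]; exact hcase u hu hadj.symm
    · have hWq : ∀ z ∈ q.support, z ∈ W := fun z hz =>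
        hW z (mem_support_cons_of_mem h q hz)
      have hminq : ∀ q' : G.Walk x₂ y, (∀ z ∈ q'.support, z ∈ W) → q.length ≤ q'.length := by
        intro q' hq'
        have hle := hmin (Walk.cons h q') ?_
        · rw [length_cons, length_cons] at hle; omega
        · intro z hz
          rw [support_cons, List.mem_cons] at hz
          rcases hz with rfl | hz
          · exact hW _ (start_mem_support _)
          · exact hq' z hz
      have := ih hWq hminq hu hv hadj
      rw [edges_cons, List.mem_cons]; right; exact this

variable {V : Type*} [DecidableEq V] {G : SimpleGraph V}

/-- `v` is reachable from `a` by a walk avoiding `S`. -/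
def Reach (G : SimpleGraph V) (S : Set V) (a v : V) : Prop :=
  ∃ w : G.Walk a v, ∀ z ∈ w.support, z ∉ S

lemma Reach.not_mem {S : Set V} {a v : V} (h : Reach G S a v) : v ∉ S := by
  obtain ⟨w, hw⟩ := h
  exact hw v (end_mem_support w)

lemma Reach.not_mem_start {S : Set V} {a v : V} (h : Reach G S a v) : a ∉ S := by
  obtain ⟨w, hw⟩ := h
  exact hw a (start_mem_support w)

lemma reach_refl {S : Set V} {a : V} (ha : a ∉ S) : Reach G S a a :=
  ⟨Walk.nil, by simpa using ha⟩

lemma Reach.extend {S : Set V} {a u z : V} (h : Reach G S a u) (w : G.Walk u z)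
    (hw : ∀ t ∈ w.support, t ∉ S) : Reach G S a z := by
  obtain ⟨w₀, hw₀⟩ := h
  refine ⟨w₀.append w, fun t ht => ?_⟩
  rw [support_append, List.mem_append] at ht
  rcases ht with ht | ht
  · exact hw₀ t ht
  · exact hw t (List.mem_of_mem_tail ht)

lemma Reach.symm {S : Set V} {a v : V} (h : Reach G S a v) : Reach G S v a := by
  obtain ⟨w, hw⟩ := h
  exact ⟨w.reverse, fun z hz => hw z (by rwa [support_reverse, List.mem_reverse] at hz)⟩

lemma Reach.trans {S : Set V} {a u v : V} (h : Reach G S a u) (h' : Reach G S u v) :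
    Reach G S a v := by
  obtain ⟨w, hw⟩ := h'
  exact h.extend w hw

lemma Reach.adj {S : Set V} {a u z : V} (h : Reach G S a u) (hadj : G.Adj u z) (hz : z ∉ S) :
    Reach G S a z := by
  refine h.extend (Walk.cons hadj Walk.nil) ?_
  intro t ht
  simp only [support_cons, support_nil, List.mem_cons, List.mem_singleton] at ht
  rcases ht with rfl | rfl | h'
  · exact h.not_mem
  · exact hz
  · exact absurd h' List.not_mem_nil

lemma Reach.support {S : Set V} {a u z : V} (h : Reach G S a u) (w : G.Walk u z)
    (hw : ∀ t ∈ w.support, t ∉ S) : ∀ t ∈ w.support, Reach G S a t := by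
  intro t ht
  exact h.extend (w.takeUntil t ht) fun z hz => hw z (support_takeUntil_subset w ht hz)

/-- If every `a`-`b` walk meets `S`, reach sets from `a` and `b` avoiding `S` are disjoint. -/
lemma reach_disjoint {S : Set V} {a b x : V}
    (hsep : ∀ w : G.Walk a b, ∃ z ∈ w.support, z ∈ S)
    (hax : Reach G S a x) (hbx : Reach G S b x) : False := by
  obtain ⟨w, hw⟩ := hax.trans hbx.symm
  obtain ⟨z, hz, hzS⟩ := hsep w
  exact hw z hz hzS

lemma reach_no_adj {S : Set V} {a b u v : V}
    (hsep : ∀ w : G.Walk a b, ∃ z ∈ w.support, z ∈ S)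
    (hau : Reach G S a u) (hbv : Reach G S b v) (hadj : G.Adj u v) : False :=
  reach_disjoint hsep (hau.adj hadj hbv.not_mem) hbv

/-- If a walk from `a` avoids `S \ {s₀}` and passes through `s₀ ∈ S`, then `s₀` has a
neighbor reachable from `a` avoiding `S`. -/
lemma neighbor_of_through {S : Finset V} {a c s₀ : V} (haS : a ∉ S) (hs₀ : s₀ ∈ S)
    (w : G.Walk a c) (hsup : ∀ z ∈ w.support, z ∉ S.erase s₀) (hmem : s₀ ∈ w.support) :
    ∃ u, G.Adj s₀ u ∧ Reach G (↑S) a u := by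
  set p := w.takeUntil s₀ hmem with hp
  have hcount : p.support.count s₀ = 1 := count_support_takeUntil_eq_one w hmem
  have hpavoid : ∀ z ∈ p.support, z ∉ S.erase s₀ := fun z hz =>
    hsup z (support_takeUntil_subset w hmem hz)
  have hne : a ≠ s₀ := fun h => haS (h ▸ hs₀)
  have hnil : ¬ p.reverse.Nil := not_nil_of_ne (Ne.symm hne)
  set u := p.reverse.getVert 1 with hu
  have hadj : G.Adj s₀ u := p.reverse.adj_snd hnil
  have htail : p.reverse.tail.support = p.reverse.support.tail :=
    support_tail_of_not_nil _ hnil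
  have hrev : p.reverse.support = s₀ :: p.reverse.support.tail := support_eq_cons p.reverse
  have hcount' : p.reverse.support.count s₀ = 1 := by
    rw [support_reverse, List.count_reverse]; exact hcount
  have hnos₀ : s₀ ∉ p.reverse.support.tail := by
    have h0 : (p.reverse.support.tail).count s₀ = 0 := by
      have := hcount'
      rw [hrev, List.count_cons_self] at this
      omega
    exact List.count_eq_zero.mp h0
  have havoid : ∀ z ∈ p.reverse.tail.support, z ∉ (↑S : Set V) := by
    intro z hz
    rw [htail] at hz
    have hz' : z ∈ p.support := by
      rw [← List.mem_reverse, ← support_reverse]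
      exact List.mem_of_mem_tail hz
    have h1 : z ∉ S.erase s₀ := hpavoid z hz'
    have h2 : z ≠ s₀ := fun h => hnos₀ (h ▸ hz)
    intro hzS
    exact h1 (Finset.mem_erase.mpr ⟨h2, hzS⟩)
  have : Reach G (↑S) u a := ⟨p.reverse.tail, havoid⟩
  exact ⟨u, hadj, this.symm⟩
set_option maxHeartbeats 1000000 in
lemma sep_clique {V : Type*} [Fintype V] [DecidableEq V] {G : SimpleGraph V}
    (hch : IsChordal G) {S : Finset V} {a b : V} (haS : a ∉ S) (hbS : b ∉ S)
    (hsep : ∀ w : G.Walk a b, ∃ z ∈ w.support, z ∈ S)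
    (hmin : ∀ T : Finset V, a ∉ T → b ∉ T →
      (∀ w : G.Walk a b, ∃ z ∈ w.support, z ∈ T) → S.card ≤ T.card) :
    ∀ x ∈ S, ∀ y ∈ S, x ≠ y → G.Adj x y := by
  classical
  -- every separator vertex has neighbors reachable from both sides
  have hnb : ∀ s₀ ∈ S, (∃ u, G.Adj s₀ u ∧ Reach G (↑S) a u) ∧
      (∃ u, G.Adj s₀ u ∧ Reach G (↑S) b u) := by
    intro s₀ hs₀
    have hcard : (S.erase s₀).card < S.card := Finset.card_erase_lt_of_mem hs₀
    have hnsep : ¬ (∀ w : G.Walk a b, ∃ z ∈ w.support, z ∈ S.erase s₀) := by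
      intro hc
      have := hmin (S.erase s₀) (fun h => haS (Finset.mem_of_mem_erase h))
        (fun h => hbS (Finset.mem_of_mem_erase h)) hc
      omega
    push_neg at hnsep
    obtain ⟨w, hw⟩ := hnsep
    obtain ⟨z, hz, hzS⟩ := hsep w
    have hzs₀ : z = s₀ := by
      by_contra hne
      exact hw z hz (Finset.mem_erase.mpr ⟨hne, hzS⟩)
    subst hzs₀
    constructor
    · exact neighbor_of_through haS hzS w hw hz
    · refine neighbor_of_through hbS hzS w.reverse ?_ ?_
      · intro t ht
        rw [support_reverse, List.mem_reverse] at ht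
        exact hw t ht
      · rw [support_reverse, List.mem_reverse]; exact hz
  intro x hx y hy hxy
  by_contra hnxy
  obtain ⟨⟨ux, hux, hrux⟩, ⟨vx, hvx, hrvx⟩⟩ := hnb x hx
  obtain ⟨⟨uy, huy, hruy⟩, ⟨vy, hvy, hrvy⟩⟩ := hnb y hy
  have hAB : ∀ z, Reach G (↑S) a z → Reach G (↑S) b z → False := fun z h h' =>
    reach_disjoint hsep h h'
  set WA : Set V := {z | z = x ∨ z = y ∨ Reach G (↑S) a z} with hWA
  set WB : Set V := {z | z = x ∨ z = y ∨ Reach G (↑S) b z} with hWB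
  have hxWA : x ∈ WA := Or.inl rfl
  have hyWA : y ∈ WA := Or.inr (Or.inl rfl)
  have hxWB : x ∈ WB := Or.inl rfl
  have hyWB : y ∈ WB := Or.inr (Or.inl rfl)
  have hWAB : ∀ z, z ∈ WA → z ∈ WB → z = x ∨ z = y := by
    intro z h1 h2
    rcases h1 with rfl | rfl | h1
    · exact Or.inl rfl
    · exact Or.inr rfl
    rcases h2 with rfl | rfl | h2
    · exact Or.inl rfl
    · exact Or.inr rfl
    exact absurd (hAB z h1 h2) (by simp)
  -- construct some x-y walk in WA, and pick a minimal one
  have mkWalk : ∀ (x' y' u₁ u₂ : V) (c : V), G.Adj x' u₁ → G.Adj y' u₂ →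
      Reach G (↑S) c u₁ → Reach G (↑S) c u₂ →
      ∃ p : G.Walk x' y', ∀ z ∈ p.support, z = x' ∨ z = y' ∨ Reach G (↑S) c z := by
    intro x' y' u₁ u₂ c hadj1 hadj2 hr1 hr2
    obtain ⟨w1, hw1⟩ := hr1.symm.trans hr2
    have hall := hr1.support w1 hw1
    refine ⟨Walk.cons hadj1 (w1.concat hadj2.symm), ?_⟩
    intro z hz
    rw [support_cons, List.mem_cons] at hz
    rcases hz with rfl | hz
    · exact Or.inl rfl
    rw [support_concat, List.mem_append, List.mem_singleton] at hz
    rcases hz with hz | rfl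
    · exact Or.inr (Or.inr (hall z hz))
    · exact Or.inr (Or.inl rfl)
  -- minimal path pA in WA
  have hminpath : ∀ (x' y' : V) (W : Set V), x' ≠ y' →
      (∃ p : G.Walk x' y', ∀ z ∈ p.support, z ∈ W) →
      ∃ p : G.Walk x' y', (∀ z ∈ p.support, z ∈ W) ∧ p.IsPath ∧
        (∀ q : G.Walk x' y', (∀ z ∈ q.support, z ∈ W) → p.length ≤ q.length) := by
    intro x' y' W _ hex
    have hex' : ∃ n, ∃ p : G.Walk x' y', (∀ z ∈ p.support, z ∈ W) ∧ p.length = n := by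
      obtain ⟨p, hp⟩ := hex; exact ⟨p.length, p, hp, rfl⟩
    obtain ⟨p1, hp1W, hp1len⟩ := Nat.find_spec hex'
    refine ⟨p1.bypass, fun z hz => hp1W z (support_bypass_subset p1 hz), bypass_isPath p1,
      fun q hq => ?_⟩
    calc p1.bypass.length ≤ p1.length := length_bypass_le p1
    _ = Nat.find hex' := hp1len
    _ ≤ q.length := Nat.find_min' hex' ⟨q, hq, rfl⟩
  obtain ⟨pA, hpAW, hpApath, hpAmin⟩ := hminpath x y WA hxy
    ((mkWalk x y ux uy a hux huy hrux hruy).imp fun p hp => hp)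
  obtain ⟨pB, hpBW, hpBpath, hpBmin⟩ := hminpath y x WB (Ne.symm hxy)
    ((mkWalk y x vy vx b hvy hvx hrvy hrvx).imp fun p hp => fun z hz => by
      rcases hp z hz with h | h | h
      exacts [Or.inr (Or.inl h), Or.inl h, Or.inr (Or.inr h)])
  -- lengths at least 2
  have hlen2 : ∀ {x' y' : V} (p : G.Walk x' y'), x' ≠ y' → ¬G.Adj x' y' → 2 ≤ p.length := by
    intro x' y' p hne hnadj
    by_contra hlt
    push_neg at hlt
    interval_cases h : p.length
    · exact hne (eq_of_length_eq_zero h)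
    · have := p.adj_getVert_succ (i := 0) (by omega)
      rw [getVert_zero] at this
      have h2 : p.getVert 1 = y' := by
        have := p.getVert_length
        rwa [h] at this
      rw [h2] at this
      exact hnadj this
  have hlA : 2 ≤ pA.length := hlen2 pA hxy hnxy
  have hlB : 2 ≤ pB.length := hlen2 pB (Ne.symm hxy) (fun h => hnxy h.symm)
  set cyc : G.Walk x x := pA.append pB with hcyc
  have hlen4 : 4 ≤ cyc.length := by rw [hcyc, length_append]; omega
  -- supports
  have hsupcyc : cyc.support = pA.support ++ pB.support.tail := support_append pA pB
  have hxnotailA : x ∉ pA.support.tail := by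
    have := hpApath.support_nodup
    rw [support_eq_cons] at this
    exact (List.nodup_cons.mp this).1
  have hynotailB : y ∉ pB.support.tail := by
    have := hpBpath.support_nodup
    rw [support_eq_cons] at this
    exact (List.nodup_cons.mp this).1
  -- cycle
  have hcyccyc : cyc.IsCycle := by
    constructor
    constructor
    constructor
    · -- edges nodup
      rw [hcyc, edges_append]
      refine List.Nodup.append hpApath.isTrail.edges_nodup hpBpath.isTrail.edges_nodup ?_
      intro e he1 he2
      induction e using Sym2.ind with
      | _ u v =>
        have hu1 := pA.fst_mem_support_of_mem_edges he1
        have hv1 := pA.snd_mem_support_of_mem_edges he1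
        have hu2 := pB.fst_mem_support_of_mem_edges he2
        have hv2 := pB.snd_mem_support_of_mem_edges he2
        have hadj := pA.adj_of_mem_edges he1
        have hu := hWAB u (hpAW u hu1) (hpBW u hu2)
        have hv := hWAB v (hpAW v hv1) (hpBW v hv2)
        rcases hu with rfl | rfl <;> rcases hv with rfl | rfl
        · exact hadj.ne rfl
        · exact hnxy hadj
        · exact hnxy hadj.symm
        · exact hadj.ne rfl
    · -- not nil
      intro hnil
      have : cyc.length = 0 := by rw [hnil]; rfl
      omega
    · -- support tail nodup
      obtain ⟨l, hl⟩ : ∃ l, pA.support = x :: l := ⟨pA.support.tail, support_eq_cons pA⟩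
      have htl : cyc.support.tail = pA.support.tail ++ pB.support.tail := by
        rw [hsupcyc, hl]; simp
      rw [htl]
      refine List.Nodup.append ?_ ?_ ?_
      · exact hpApath.support_nodup.tail
      · exact hpBpath.support_nodup.tail
      · intro z hz1 hz2
        have hzx : z ≠ x := fun h => hxnotailA (h ▸ hz1)
        have hzy : z ≠ y := fun h => hynotailB (h ▸ hz2)
        have h1 := hpAW z (List.mem_of_mem_tail hz1)
        have h2 := hpBW z (List.mem_of_mem_tail hz2)
        rcases h1 with rfl | rfl | h1
        · exact hzx rfl
        · exact hzy rfl
        rcases h2 with rfl | rfl | h2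
        · exact hzx rfl
        · exact hzy rfl
        exact hAB z h1 h2
  -- the chord
  obtain ⟨u, v, hu, hv, huv, hnsub⟩ := hch cyc hcyccyc hlen4
  -- locating chord endpoints
  have hmemW : ∀ z ∈ cyc.support, z ∈ WA ∨ z ∈ WB := by
    intro z hz
    rw [hsupcyc, List.mem_append] at hz
    rcases hz with hz | hz
    · exact Or.inl (hpAW z hz)
    · exact Or.inr (hpBW z (List.mem_of_mem_tail hz))
  have memA : ∀ z ∈ cyc.support, z ∈ WA → z ∈ pA.support := by
    intro z hz hzWA
    rw [hsupcyc, List.mem_append] at hz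
    rcases hz with hz | hz
    · exact hz
    · have hzWB := hpBW z (List.mem_of_mem_tail hz)
      rcases hWAB z hzWA hzWB with rfl | rfl
      · exact start_mem_support pA
      · exact end_mem_support pA
  have memB : ∀ z ∈ cyc.support, z ∈ WB → z ∈ pB.support := by
    intro z hz hzWB
    rw [hsupcyc, List.mem_append] at hz
    rcases hz with hz | hz
    · have hzWA := hpAW z hz
      rcases hWAB z hzWA hzWB with rfl | rfl
      · exact end_mem_support pB
      · exact start_mem_support pB
    · exact List.mem_of_mem_tail hz
  have bothA : u ∈ pA.support → v ∈ pA.support → False := by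
    intro hu' hv'
    have hedge := chord_mem_edges pA hpAW hpAmin hu' hv' huv
    have : s(u, v) ∈ cyc.edges := by
      rw [hcyc, edges_append, List.mem_append]; exact Or.inl hedge
    exact hnsub ((Subgraph.mem_edgeSet).mp ((mem_edges_toSubgraph cyc).mpr this))
  have bothB : u ∈ pB.support → v ∈ pB.support → False := by
    intro hu' hv'
    have hedge := chord_mem_edges pB hpBW hpBmin hu' hv' huv
    have : s(u, v) ∈ cyc.edges := by
      rw [hcyc, edges_append, List.mem_append]; exact Or.inr hedge
    exact hnsub ((Subgraph.mem_edgeSet).mp ((mem_edges_toSubgraph cyc).mpr this))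
  rcases hmemW u hu with huW | huW <;> rcases hmemW v hv with hvW | hvW
  · exact bothA (memA u hu huW) (memA v hv hvW)
  · -- u ∈ WA, v ∈ WB
    rcases huW with rfl | rfl | hur
    · exact bothB (memB u hu hxWB) (memB v hv hvW)
    · exact bothB (memB u hu hyWB) (memB v hv hvW)
    rcases hvW with rfl | rfl | hvr
    · exact bothA (memA u hu (Or.inr (Or.inr hur))) (memA v hv hxWA)
    · exact bothA (memA u hu (Or.inr (Or.inr hur))) (memA v hv hyWA)
    exact reach_no_adj hsep hur hvr huv
  · -- u ∈ WB, v ∈ WA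
    rcases huW with rfl | rfl | hur
    · exact bothA (memA u hu hxWA) (memA v hv hvW)
    · exact bothA (memA u hu hyWA) (memA v hv hvW)
    rcases hvW with rfl | rfl | hvr
    · exact bothB (memB u hu (Or.inr (Or.inr hur))) (memB v hv hxWB)
    · exact bothB (memB u hu (Or.inr (Or.inr hur))) (memB v hv hyWB)
    exact reach_no_adj hsep hvr hur huv.symm
  · exact bothB (memB u hu huW) (memB v hv hvW)

/-- A vertex whose neighborhood is a clique. -/
def Simplicial {V : Type*} (G : SimpleGraph V) (v : V) : Prop :=
  ∀ x y, G.Adj v x → G.Adj v y → x ≠ y → G.Adj x y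

universe u

lemma exists_simplicial_side {n : ℕ}
    (IH : ∀ (V' : Type u) [Fintype V'] [DecidableEq V'] (G' : SimpleGraph V'),
      Fintype.card V' ≤ n → Nonempty V' → IsChordal G' →
      ((∀ x y : V', x ≠ y → G'.Adj x y) ∨
        ∃ u v : V', u ≠ v ∧ ¬G'.Adj u v ∧ Simplicial G' u ∧ Simplicial G' v))
    {V : Type u} [Fintype V] [DecidableEq V] {G : SimpleGraph V} (hch : IsChordal G)
    {S : Finset V} {a b : V} (haS : a ∉ S) (hbS : b ∉ S)
    (hsep : ∀ w : G.Walk a b, ∃ z ∈ w.support, z ∈ S)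
    (hclq : ∀ x ∈ S, ∀ y ∈ S, x ≠ y → G.Adj x y)
    (hcard : Fintype.card V ≤ n + 1) :
    ∃ v, Reach G (↑S) a v ∧ Simplicial G v := by
  classical
  set U : Set V := {z | Reach G (↑S) a z} ∪ ↑S with hU
  have haU : a ∈ U := Or.inl (reach_refl haS)
  have hbU : b ∉ U := by
    rintro (hb | hb)
    · obtain ⟨w, hw⟩ := hb
      obtain ⟨z, hz, hzS⟩ := hsep w
      exact hw z hz hzS
    · exact hbS hb
  have hnbr : ∀ v, Reach G (↑S) a v → ∀ z, G.Adj v z → z ∈ U := by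
    intro v hv z hadj
    by_cases hzS : z ∈ S
    · exact Or.inr hzS
    · exact Or.inl (hv.adj hadj hzS)
  haveI : Fintype ↥U := Set.Finite.fintype (Set.toFinite U)
  have hcardU : Fintype.card ↥U ≤ n := by
    have hlt : Fintype.card ↥U < Fintype.card V := by
      apply Fintype.card_lt_of_injective_of_notMem (Subtype.val) Subtype.val_injective (b := b)
      rw [Subtype.range_coe]
      exact hbU
    omega
  have hchU : IsChordal (G.induce U) := isChordal_induce hch U
  have transfer : ∀ (u : ↥U), Reach G (↑S) a ↑u → Simplicial (G.induce U) u →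
      Simplicial G ↑u := by
    intro u hr hs z1 z2 h1 h2 hne
    have hz1 : z1 ∈ U := hnbr _ hr _ h1
    have hz2 : z2 ∈ U := hnbr _ hr _ h2
    exact hs ⟨z1, hz1⟩ ⟨z2, hz2⟩ h1 h2 (fun h => hne (congrArg Subtype.val h))
  rcases IH ↥U (G.induce U) hcardU ⟨⟨a, haU⟩⟩ hchU with hcomp |
    ⟨u1, u2, hne12, hnadj12, hs1, hs2⟩
  · refine ⟨a, reach_refl haS, ?_⟩
    intro z1 z2 h1 h2 hne
    have hz1 : z1 ∈ U := hnbr _ (reach_refl haS) _ h1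
    have hz2 : z2 ∈ U := hnbr _ (reach_refl haS) _ h2
    exact hcomp ⟨z1, hz1⟩ ⟨z2, hz2⟩ (fun h => hne (congrArg Subtype.val h))
  · have hvals : (↑u1 : V) ≠ ↑u2 := fun h => hne12 (Subtype.ext h)
    have : Reach G (↑S) a ↑u1 ∨ Reach G (↑S) a ↑u2 := by
      rcases u1.2 with h1 | h1
      · exact Or.inl h1
      rcases u2.2 with h2 | h2
      · exact Or.inr h2
      exact absurd (hclq _ h1 _ h2 hvals) hnadj12
    rcases this with hr | hr
    · exact ⟨↑u1, hr, transfer u1 hr hs1⟩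
    · exact ⟨↑u2, hr, transfer u2 hr hs2⟩

theorem dirac_strong : ∀ (n : ℕ) (V : Type u) [Fintype V] [DecidableEq V]
    (G : SimpleGraph V), Fintype.card V ≤ n → Nonempty V → IsChordal G →
    ((∀ x y : V, x ≠ y → G.Adj x y) ∨
      ∃ u v : V, u ≠ v ∧ ¬G.Adj u v ∧ Simplicial G u ∧ Simplicial G v) := by
  intro n
  induction n with
  | zero =>
    intro V _ _ G hcard hne _
    have := Fintype.card_pos_iff.mpr hne
    omega
  | succ n IH =>
    intro V instF instD G hcard hne hch
    classical
    by_cases hcomp : ∀ x y : V, x ≠ y → G.Adj x y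
    · exact Or.inl hcomp
    right
    push_neg at hcomp
    obtain ⟨a, b, hab, hnadj⟩ := hcomp
    have hsepfull : ∀ (T : Finset V), (∀ z, z ≠ a → z ≠ b → z ∈ T) →
        ∀ w : G.Walk a b, ∃ z ∈ w.support, z ∈ T := by
      intro T hT w
      by_contra hc
      push_neg at hc
      cases w with
      | nil => exact hab rfl
      | @cons _ c _ h q =>
        have hcsup : c ∈ (Walk.cons h q).support := by
          rw [Walk.support_cons]
          exact List.mem_cons_of_mem _ (Walk.start_mem_support q)
        have := hc c hcsup
        rcases (by by_contra hcc; push_neg at hcc; exact this (hT c hcc.1 hcc.2) : c = a ∨ c = b)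
          with rfl | rfl
        · exact G.irrefl h
        · exact hnadj h
    have hex : ∃ k, ∃ S : Finset V,
        (a ∉ S ∧ b ∉ S ∧ ∀ w : G.Walk a b, ∃ z ∈ w.support, z ∈ S) ∧ S.card = k := by
      refine ⟨_, Finset.univ.filter (fun z => z ≠ a ∧ z ≠ b), ⟨?_, ?_, ?_⟩, rfl⟩
      · simp
      · simp
      · exact hsepfull _ (fun z h1 h2 => by simp [h1, h2])
    obtain ⟨S, ⟨haS, hbS, hsep⟩, hScard⟩ := Nat.find_spec hex
    have hmin : ∀ T : Finset V, a ∉ T → b ∉ T →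
        (∀ w : G.Walk a b, ∃ z ∈ w.support, z ∈ T) → S.card ≤ T.card := by
      intro T h1 h2 h3
      rw [hScard]
      exact Nat.find_min' hex ⟨T, ⟨h1, h2, h3⟩, rfl⟩
    have hclq := sep_clique hch haS hbS hsep hmin
    have hsep' : ∀ w : G.Walk b a, ∃ z ∈ w.support, z ∈ S := by
      intro w
      obtain ⟨z, hz, hzS⟩ := hsep w.reverse
      rw [Walk.support_reverse, List.mem_reverse] at hz
      exact ⟨z, hz, hzS⟩
    have hclq' : ∀ x ∈ S, ∀ y ∈ S, x ≠ y → G.Adj x y := hclq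
    obtain ⟨vA, hvAr, hvAs⟩ := exists_simplicial_side IH hch haS hbS hsep hclq hcard
    obtain ⟨vB, hvBr, hvBs⟩ := exists_simplicial_side IH hch hbS haS hsep' hclq' hcard
    refine ⟨vA, vB, ?_, ?_, hvAs, hvBs⟩
    · intro h
      exact reach_disjoint hsep hvAr (h ▸ hvBr)
    · intro h
      exact reach_no_adj hsep hvAr hvBr h

theorem chordal_exists_simplicial {V : Type u} [Fintype V] [DecidableEq V] {G : SimpleGraph V}
    (hch : IsChordal G) (hne : Nonempty V) : ∃ v, Simplicial G v := by
  rcases dirac_strong (Fintype.card V) V G le_rfl hne hch with hcomp |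
    ⟨u, _, _, _, hu, _⟩
  · obtain ⟨v⟩ := hne
    exact ⟨v, fun x y _ _ hne' => hcomp x y hne'⟩
  · exact ⟨u, hu⟩

open Matrix in
lemma psd_add {V : Type*} [Fintype V] {A B : Matrix V V ℝ}
    (hA : A.PosSemidef) (hB : B.PosSemidef) : (A + B).PosSemidef := by
  refine Matrix.PosSemidef.of_dotProduct_mulVec_nonneg (hA.1.add hB.1) fun x => ?_
  rw [add_mulVec, dotProduct_add]
  exact add_nonneg (hA.dotProduct_mulVec_nonneg x) (hB.dotProduct_mulVec_nonneg x)

open Matrix in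
lemma psd_diag_nonneg {V : Type*} [Fintype V] [DecidableEq V] {Q : Matrix V V ℝ}
    (hQ : Q.PosSemidef) (v : V) : 0 ≤ Q v v := by
  have h := hQ.dotProduct_mulVec_nonneg (Pi.single v 1 : V → ℝ)
  rw [show star (Pi.single v 1 : V → ℝ) = Pi.single v 1 by simp, mulVec_single,
    single_dotProduct, one_mul] at h
  simpa using h

/-- Main decomposition: a PSD matrix supported on `s` with chordal sparsity pattern is a sum
of PSD matrices supported on cliques. -/
lemma dec_cliques {V : Type u} [Fintype V] [DecidableEq V] {G : SimpleGraph V}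
    (hch : IsChordal G) :
    ∀ (n : ℕ) (s : Finset V) (Q : Matrix V V ℝ), s.card ≤ n → Q.PosSemidef →
    (∀ β γ, (β ∉ s ∨ γ ∉ s) → Q β γ = 0) →
    (∀ β γ, β ≠ γ → ¬G.Adj β γ → Q β γ = 0) →
    ∃ L : List (Matrix V V ℝ × Set V), Q = (L.map Prod.fst).sum ∧
      ∀ p ∈ L, (p.1).PosSemidef ∧ G.IsClique p.2 ∧
        ∀ β γ, (β ∉ p.2 ∨ γ ∉ p.2) → p.1 β γ = 0 := by
  intro n
  induction n with
  | zero =>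
    intro s Q hcard hQ hsupp hpat
    refine ⟨[], ?_, by simp⟩
    have hs : s = ∅ := Finset.card_eq_zero.mp (Nat.le_zero.mp hcard)
    ext β γ
    simp only [List.map_nil, List.sum_nil, Matrix.zero_apply]
    exact hsupp β γ (Or.inl (by simp [hs]))
  | succ n IH =>
    intro s Q hcard hQ hsupp hpat
    classical
    rcases Finset.eq_empty_or_nonempty s with rfl | ⟨w₀, hw₀⟩
    · refine ⟨[], ?_, by simp⟩
      ext β γ
      simp only [List.map_nil, List.sum_nil, Matrix.zero_apply]
      exact hsupp β γ (Or.inl (by simp))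
    · set U : Set V := ↑s with hUdef
      haveI : Fintype ↥U := Set.Finite.fintype (Set.toFinite U)
      obtain ⟨v₀, hsimp⟩ := chordal_exists_simplicial (isChordal_induce hch U)
        ⟨⟨w₀, by simpa [hUdef] using hw₀⟩⟩
      set v : V := ↑v₀ with hvdef
      have hvs : v ∈ s := v₀.2
      have hsymm := psd_symm_entries hQ.1
      have hcard' : (s.erase v).card ≤ n := by
        have := Finset.card_erase_lt_of_mem hvs
        omega
      set K : Set V := {v} ∪ {z | z ∈ U ∧ G.Adj v z} with hKdef
      have hvK : v ∈ K := Or.inl rfl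
      have hKn : ∀ z, z ∈ K → z ≠ v → z ∈ U ∧ G.Adj v z := by
        intro z hz hne
        rcases hz with rfl | hz
        · exact absurd rfl hne
        · exact hz
      have hKclique : G.IsClique K := by
        intro x hx y hy hxy
        rcases hx with rfl | ⟨hxU, hxadj⟩
        · rcases hy with rfl | ⟨hyU, hyadj⟩
          · exact absurd rfl hxy
          · exact hyadj
        · rcases hy with rfl | ⟨hyU, hyadj⟩
          · exact hxadj.symm
          · exact hsimp ⟨x, hxU⟩ ⟨y, hyU⟩ hxadj hyadj
              (fun h => hxy (congrArg Subtype.val h))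
      -- key: entries of column v vanish outside K
      have hcol : ∀ γ, γ ∉ K → Q v γ = 0 := by
        intro γ hγ
        have hne : γ ≠ v := fun h => hγ (h ▸ hvK)
        by_cases hγs : γ ∈ s
        · have hnadj : ¬G.Adj v γ := fun h => hγ (Or.inr ⟨hγs, h⟩)
          exact hpat v γ (Ne.symm hne) hnadj
        · exact hsupp v γ (Or.inr hγs)
      rcases eq_or_lt_of_le (psd_diag_nonneg hQ v) with hd0 | hdpos
      · -- zero diagonal: column is zero, just recurse
        have hrow : ∀ γ, Q v γ = 0 := psd_row_zero hQ v hd0.symm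
        have hsupp' : ∀ β γ, (β ∉ s.erase v ∨ γ ∉ s.erase v) → Q β γ = 0 := by
          intro β γ hβγ
          rcases hβγ with hβ | hγ
          · rcases Decidable.em (β = v) with rfl | hne
            · exact hrow γ
            · exact hsupp β γ (Or.inl (fun hβs => hβ (Finset.mem_erase.mpr ⟨hne, hβs⟩)))
          · rcases Decidable.em (γ = v) with rfl | hne
            · rw [hsymm v β]; exact hrow β
            · exact hsupp β γ (Or.inr (fun hγs => hγ (Finset.mem_erase.mpr ⟨hne, hγs⟩)))
        exact IH (s.erase v) Q hcard' hQ hsupp' hpat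
      · -- positive diagonal: peel off a rank-one PSD matrix supported on K
        set d : ℝ := Q v v with hddef
        obtain ⟨hpsd1, hpsdR⟩ := psd_peel hQ v hdpos
        set Q1 : Matrix V V ℝ := Matrix.of fun β γ => Q β v * Q v γ / d with hQ1def
        have hQ1supp : ∀ β γ, (β ∉ K ∨ γ ∉ K) → Q1 β γ = 0 := by
          intro β γ hβγ
          show Q β v * Q v γ / d = 0
          rcases hβγ with hβ | hγ
          · rw [← hsymm β v, hcol β hβ]; ring
          · rw [hcol γ hγ]; ring
        set R : Matrix V V ℝ := Q - Q1 with hRdef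
        have hRv : ∀ γ, R v γ = 0 := by
          intro γ
          show Q v γ - Q v v * Q v γ / d = 0
          rw [← hddef, mul_comm, mul_div_assoc, div_self hdpos.ne', mul_one, sub_self]
        have hRv' : ∀ β, R β v = 0 := by
          intro β
          show Q β v - Q β v * Q v v / d = 0
          rw [← hddef, mul_div_assoc, div_self hdpos.ne', mul_one, sub_self]
        have hRsupp : ∀ β γ, (β ∉ s.erase v ∨ γ ∉ s.erase v) → R β γ = 0 := by
          intro β γ hβγ
          rcases hβγ with hβ | hγ
          · rcases Decidable.em (β = v) with rfl | hne
            · exact hRv γ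
            · have hβs : β ∉ s := fun hβs => hβ (Finset.mem_erase.mpr ⟨hne, hβs⟩)
              show Q β γ - Q β v * Q v γ / d = 0
              rw [hsupp β γ (Or.inl hβs), hsupp β v (Or.inl hβs)]; ring
          · rcases Decidable.em (γ = v) with rfl | hne
            · exact hRv' β
            · have hγs : γ ∉ s := fun hγs => hγ (Finset.mem_erase.mpr ⟨hne, hγs⟩)
              show Q β γ - Q β v * Q v γ / d = 0
              rw [hsupp β γ (Or.inr hγs), hsupp v γ (Or.inr hγs)]; ring
        have hRpat : ∀ β γ, β ≠ γ → ¬G.Adj β γ → R β γ = 0 := by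
          intro β γ hne hnadj
          have h1 : Q1 β γ = 0 := by
            by_cases hβ : β ∈ K
            · by_cases hγ : γ ∈ K
              · exact absurd (hKclique hβ hγ hne) hnadj
              · exact hQ1supp β γ (Or.inr hγ)
            · exact hQ1supp β γ (Or.inl hβ)
          show Q β γ - Q1 β γ = 0
          rw [hpat β γ hne hnadj, h1, sub_self]
        obtain ⟨L, hLsum, hLprop⟩ := IH (s.erase v) R hcard' hpsdR hRsupp hRpat
        refine ⟨(Q1, K) :: L, ?_, ?_⟩
        · rw [List.map_cons, List.sum_cons, ← hLsum]
          show Q = Q1 + (Q - Q1)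
          abel
        · intro p hp
          rcases List.mem_cons.mp hp with rfl | hp
          · exact ⟨hpsd1, hKclique, hQ1supp⟩
          · exact hLprop p hp

lemma exists_maximal_clique_superset {V : Type*} [Fintype V] {G : SimpleGraph V}
    {K : Set V} (hK : G.IsClique K) :
    ∃ D : Set V, IsMaximalClique G D ∧ K ⊆ D := by
  classical
  set F : Finset (Finset V) := Finset.univ.filter
    (fun D : Finset V => G.IsClique ↑D ∧ K ⊆ ↑D) with hF
  have hKF : (Set.toFinite K).toFinset ∈ F := by
    rw [hF, Finset.mem_filter]
    refine ⟨Finset.mem_univ _, ?_, fun x hx => ?_⟩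
    · rw [Set.Finite.coe_toFinset]; exact hK
    · simpa using hx
  obtain ⟨D, hDF, hDmax⟩ := Finset.exists_max_image F (fun D => D.card) ⟨_, hKF⟩
  rw [hF, Finset.mem_filter] at hDF
  obtain ⟨-, hDclique, hKD⟩ := hDF
  refine ⟨↑D, ⟨hDclique, ?_⟩, hKD⟩
  intro D' hD'clique hDD'
  have hD'F : (Set.toFinite D').toFinset ∈ F := by
    rw [hF, Finset.mem_filter]
    refine ⟨Finset.mem_univ _, ?_, fun x hx => ?_⟩
    · rw [Set.Finite.coe_toFinset]; exact hD'clique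
    · simpa using hDD' (hKD hx)
  have hcard := hDmax _ hD'F
  have hsub : D ⊆ (Set.toFinite D').toFinset := by
    intro x hx
    rw [Set.Finite.mem_toFinset]
    exact hDD' hx
  have heq := Finset.eq_of_subset_of_card_le hsub hcard
  rw [heq, Set.Finite.coe_toFinset]

lemma group_into {V : Type*} [Fintype V] [DecidableEq V] {t : ℕ} (C : Fin t → Set V) :
    ∀ L : List (Matrix V V ℝ × Set V),
      (∀ p ∈ L, (p.1).PosSemidef ∧ (∃ i, p.2 ⊆ C i) ∧
        ∀ β γ, (β ∉ p.2 ∨ γ ∉ p.2) → p.1 β γ = 0) →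
      ∃ Qi : Fin t → Matrix V V ℝ, (L.map Prod.fst).sum = ∑ i, Qi i ∧
        ∀ i, (Qi i).PosSemidef ∧ ∀ β γ, (β ∉ C i ∨ γ ∉ C i) → Qi i β γ = 0 := by
  intro L
  induction L with
  | nil =>
    intro _
    refine ⟨fun _ => 0, by simp, fun i => ⟨Matrix.PosSemidef.zero, by simp⟩⟩
  | cons p L ihL =>
    intro hL
    obtain ⟨Qi', hsum', hprop'⟩ := ihL (fun q hq => hL q (List.mem_cons_of_mem p hq))
    obtain ⟨hpsd, ⟨i₀, hsub⟩, hpsupp⟩ := hL p List.mem_cons_self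
    refine ⟨Function.update Qi' i₀ (Qi' i₀ + p.1), ?_, ?_⟩
    · rw [List.map_cons, List.sum_cons, hsum',
        Finset.sum_update_of_mem (Finset.mem_univ i₀)]
      rw [Finset.sdiff_singleton_eq_erase i₀ Finset.univ]
      rw [← Finset.add_sum_erase _ Qi' (Finset.mem_univ i₀)]
      abel
    · intro i
      rcases Decidable.em (i = i₀) with rfl | hne
      · rw [Function.update_self]
        refine ⟨psd_add (hprop' i).1 hpsd, fun β γ hβγ => ?_⟩
        have h1 : Qi' i β γ = 0 := (hprop' i).2 β γ hβγ
        have h2 : p.1 β γ = 0 := by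
          rcases hβγ with hβ | hγ
          · exact hpsupp β γ (Or.inl (fun h => hβ (hsub h)))
          · exact hpsupp β γ (Or.inr (fun h => hγ (hsub h)))
        show Qi' i β γ + p.1 β γ = 0
        rw [h1, h2, add_zero]
      · rw [Function.update_of_ne hne]
        exact hprop' i
end Graphs

/-- Agler–Helton–McCullough–Rodman: a symmetric matrix with chordal sparsity pattern `G`
whose maximal cliques are `C 1, …, C t` is PSD iff it is a sum of PSD matrices each
supported on a maximal clique. -/
theorem posSemidef_iff_clique_decomposition (V : Type*) [Fintype V] [DecidableEq V]
    (G : SimpleGraph V) (hchord : IsChordal G) (t : ℕ) (C : Fin t → Set V)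
    (hC : ∀ s : Set V, IsMaximalClique G s ↔ ∃ i, s = C i)
    (Q : Matrix V V ℝ) (hsym : Q.IsSymm)
    (hpat : ∀ β γ, β ≠ γ → ¬ G.Adj β γ → Q β γ = 0) :
    Q.PosSemidef ↔
      ∃ Qi : Fin t → Matrix V V ℝ, Q = ∑ i, Qi i ∧
        ∀ i, (Qi i).PosSemidef ∧ ∀ β γ, (β ∉ C i ∨ γ ∉ C i) → Qi i β γ = 0 := by
  constructor
  · intro hQ
    obtain ⟨L, hLsum, hLprop⟩ := dec_cliques hchord (Finset.univ.card) Finset.univ Q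
      le_rfl hQ (fun β γ h => by rcases h with h | h <;> exact absurd (Finset.mem_univ _) h)
      hpat
    have hside : ∀ p ∈ L, (p.1).PosSemidef ∧ (∃ i, p.2 ⊆ C i) ∧
        ∀ β γ, (β ∉ p.2 ∨ γ ∉ p.2) → p.1 β γ = 0 := by
      intro p hp
      obtain ⟨hpsd, hclq, hsupp⟩ := hLprop p hp
      obtain ⟨D, hDmax, hKD⟩ := exists_maximal_clique_superset hclq
      obtain ⟨i, rfl⟩ := (hC D).mp hDmax
      exact ⟨hpsd, ⟨i, hKD⟩, hsupp⟩
    obtain ⟨Qi, hQisum, hQiprop⟩ := group_into C L hside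
    exact ⟨Qi, by rw [hLsum, hQisum], hQiprop⟩
  · rintro ⟨Qi, rfl, hQi⟩
    have : ∀ (s : Finset (Fin t)), Matrix.PosSemidef (∑ i ∈ s, Qi i) := by
      intro s
      induction s using Finset.induction with
      | empty => simpa using Matrix.PosSemidef.zero
      | insert _ _ hns ih =>
        rw [Finset.sum_insert hns]
        exact psd_add (hQi _).1 ih
    exact this Finset.univ
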